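/- Let (X, d) be a locally compact length metric space. Then the following assertions are equivalent: (1) (X,d) is complete as a metric space; (2) (X,d) satisfies the Heine–Borel property, i.e. every closed metric ball in X is compact; (3) (X,d) is geodesically complete, i.e. every constant speed geodesic γ : [0,a) → X extends to a continuous path γ̄ : [0,a] → X; (4) every Lipschitz path γ : [0,a) → X extends to a continuous path γ̄ : [0,a] → X; (5) (X,d) is divergent-paths complete, i.e. every locally Lipschitz divergent path γ : [0,a) → X has infinite length. -/

import Mathlib

open scoped Topology ENNReal NNReal
open Set

noncomputable section

/-- A path `γ : [a,b) → X` is divergent if it eventually leaves every compact subset of `X`. -/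
def IsDivergentPathOn {X : Type*} [TopologicalSpace X] (γ : ℝ → X) (a b : ℝ) : Prop :=
  ∀ K : Set X, IsCompact K → ∃ T : ℝ, a ≤ T ∧ T < b ∧ ∀ t : ℝ, T ≤ t → t < b → γ t ∉ K

/-- `(X, d)` is a length metric space: the distance between two points is the infimum of the
lengths (total variations) of continuous paths joining them.  (Paths of infinite length do not
affect the infimum, so we may take the infimum over all continuous paths.) -/
def IsLengthMetricSpace (X : Type*) [MetricSpace X] : Prop :=
  ∀ x y : X,
    edist x y =
      ⨅ γ : {γ : ℝ → X // ContinuousOn γ (Set.Icc 0 1) ∧ γ 0 = x ∧ γ 1 = y},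
        eVariationOn γ.1 (Set.Icc 0 1)

/-- A constant speed geodesic `γ : [a,b) → X`: a Lipschitz path which has constant speed (the
length of `γ` on `[s,t]` is `v·(t−s)` for a fixed `v ≥ 0`) and is locally minimizing (near each
parameter, the length of `γ` between two points equals the distance between them). -/
def IsConstantSpeedGeodesicOn {X : Type*} [MetricSpace X] (γ : ℝ → X) (a b : ℝ) : Prop :=
  (∃ C : ℝ≥0, LipschitzOnWith C γ (Set.Ico a b)) ∧
  (∃ v : ℝ, 0 ≤ v ∧ ∀ s t : ℝ, a ≤ s → s ≤ t → t < b →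
      eVariationOn γ (Set.Icc s t) = ENNReal.ofReal (v * (t - s))) ∧
  (∀ t₀ : ℝ, a ≤ t₀ → t₀ < b → ∃ ε > 0, ∀ s t : ℝ, a ≤ s → s ≤ t → t < b →
      t₀ - ε ≤ s → t ≤ t₀ + ε → eVariationOn γ (Set.Icc s t) = edist (γ s) (γ t))


namespace HopfRinowAux

open Metric UniformSpace Filter

variable {X : Type*} [MetricSpace X]


lemma evar_le_lip {C : ℝ≥0} {f : ℝ → X} {s : Set ℝ} {a b : ℝ}
    (hf : LipschitzOnWith C f s) (hs : s ⊆ Set.Icc a b) :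
    eVariationOn f s ≤ C * ENNReal.ofReal (b - a) := by
  have h1 : eVariationOn f s = eVariationOn (f ∘ id) s := rfl
  rw [h1]
  refine le_trans (hf.comp_eVariationOn_le (mapsTo_id s)) (mul_le_mul_right ?_ _)
  refine le_trans (eVariationOn.mono id hs) ?_
  rcases le_total a b with hab | hba
  · have := MonotoneOn.eVariationOn_le (f := (id : ℝ → ℝ)) (s := Set.Icc a b)
      (monotoneOn_id) (a := a) (b := b) ⟨le_rfl, hab⟩ ⟨hab, le_rfl⟩
    simpa [Set.inter_self] using this
  · have hsub : (Set.Icc a b).Subsingleton := by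
      intro u hu v hv
      have := hu.1; have := hu.2; have := hv.1; have := hv.2
      linarith [le_antisymm (hu.2.trans (hba.trans hv.1)) (hv.2.trans (hba.trans hu.1))]
    rw [eVariationOn.subsingleton _ hsub]
    exact zero_le

lemma exists_point_on_path (hlength : IsLengthMetricSpace X) (x y : X) {δ r : ℝ}
    (hδ : 0 < δ) (hr0 : 0 ≤ r) (hrd : r ≤ dist x y) :
    ∃ z : X, dist x z = r ∧ dist z y ≤ dist x y - r + δ := by
  have hlt : (⨅ γ : {γ : ℝ → X // ContinuousOn γ (Set.Icc 0 1) ∧ γ 0 = x ∧ γ 1 = y},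
      eVariationOn γ.1 (Set.Icc 0 1)) < edist x y + ENNReal.ofReal δ := by
    rw [← hlength x y]
    exact ENNReal.lt_add_right (edist_ne_top x y) (by simp [hδ])
  obtain ⟨⟨γ, hcont, h0, h1⟩, hγ⟩ := iInf_lt_iff.1 hlt
  have hg : ContinuousOn (fun t => dist x (γ t)) (Set.Icc 0 1) :=
    (continuous_const.dist continuous_id).comp_continuousOn hcont
  have hmem : r ∈ Set.Icc (dist x (γ 0)) (dist x (γ 1)) := by
    rw [h0, h1]; simpa using ⟨hr0, hrd⟩
  obtain ⟨t, ht, hgt⟩ := intermediate_value_Icc (zero_le_one) hg hmem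
  refine ⟨γ t, hgt, ?_⟩
  have hadd := eVariationOn.Icc_add_Icc (s := (Set.univ : Set ℝ)) γ ht.1 ht.2 (Set.mem_univ t)
  simp only [Set.univ_inter] at hadd
  have e1 : edist x (γ t) ≤ eVariationOn γ (Set.Icc 0 t) := by
    rw [← h0]; exact eVariationOn.edist_le γ (Set.left_mem_Icc.2 ht.1) (Set.right_mem_Icc.2 ht.1)
  have e2 : edist (γ t) y ≤ eVariationOn γ (Set.Icc t 1) := by
    rw [← h1]; exact eVariationOn.edist_le γ (Set.left_mem_Icc.2 ht.2) (Set.right_mem_Icc.2 ht.2)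
  have key : edist x (γ t) + edist (γ t) y ≤ eVariationOn γ (Set.Icc 0 1) := by
    calc edist x (γ t) + edist (γ t) y ≤
        eVariationOn γ (Set.Icc 0 t) + eVariationOn γ (Set.Icc t 1) := add_le_add e1 e2
      _ = _ := hadd
  have h2 : edist x (γ t) + edist (γ t) y ≤ edist x y + ENNReal.ofReal δ :=
    key.trans hγ.le
  have hre : dist x (γ t) + dist (γ t) y ≤ dist x y + δ := by
    rw [edist_dist, edist_dist, edist_dist, ← ENNReal.ofReal_add dist_nonneg dist_nonneg,
      ← ENNReal.ofReal_add dist_nonneg hδ.le] at h2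
    exact (ENNReal.ofReal_le_ofReal_iff (by positivity)).1 h2
  rw [← hgt]
  linarith

lemma exists_point_toward (hlength : IsLengthMetricSpace X) {p : X} {ξ : Completion X} {r : ℝ}
    (hr0 : 0 ≤ r) (hrd : r ≤ dist (p : Completion X) ξ)
    (hcomp : IsCompact (Metric.closedBall p r)) :
    ∃ z : X, dist p z = r ∧
      dist (z : Completion X) ξ = dist (p : Completion X) ξ - r := by
  set D := dist (p : Completion X) ξ with hD
  have hy : ∀ n : ℕ, ∃ y : X, dist ((y : Completion X)) ξ < 1 / (n + 1) := by
    intro n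
    obtain ⟨y, hy⟩ := Metric.denseRange_iff.1 Completion.denseRange_coe ξ (1/(n+1)) (by positivity)
    exact ⟨y, by rwa [dist_comm]⟩
  choose y hy using hy
  -- distances converge
  have hyto : Tendsto (fun n => ((y n : Completion X))) atTop (𝓝 ξ) := by
    rw [tendsto_iff_dist_tendsto_zero]
    exact squeeze_zero (fun n => dist_nonneg) (fun n => (hy n).le)
      tendsto_one_div_add_atTop_nhds_zero_nat
  have hdpy : Tendsto (fun n => dist p (y n)) atTop (𝓝 D) := by
    have h := (tendsto_const_nhds (x := ((p : Completion X))) (f := atTop)).dist hyto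
    simpa only [Completion.dist_eq] using h
  set r' : ℕ → ℝ := fun n => min r (dist p (y n)) with hr'
  have hr'to : Tendsto r' atTop (𝓝 r) := by
    have := (tendsto_const_nhds (x := r) (f := (atTop : Filter ℕ))).min hdpy
    rwa [min_eq_left hrd] at this
  have hz : ∀ n : ℕ, ∃ z : X, dist p z = r' n ∧
      dist z (y n) ≤ dist p (y n) - r' n + 1/(n+1) := by
    intro n
    exact exists_point_on_path hlength p (y n) (by positivity)
      (le_min hr0 dist_nonneg) (min_le_right _ _)
  choose z hz1 hz2 using hz
  have hzball : ∀ n, z n ∈ Metric.closedBall p r := fun n => by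
    rw [Metric.mem_closedBall, dist_comm, hz1]; exact min_le_left _ _
  obtain ⟨w, hwball, φ, hφ, hwto⟩ := hcomp.tendsto_subseq hzball
  have hφ' : Tendsto φ atTop atTop := hφ.tendsto_atTop
  have hpwr : dist p w = r := by
    have h1 : Tendsto (fun n => dist p (z (φ n))) atTop (𝓝 (dist p w)) :=
      (tendsto_const_nhds).dist hwto
    have h2 : Tendsto (fun n => dist p (z (φ n))) atTop (𝓝 r) := by
      have : (fun n => dist p (z (φ n))) = fun n => r' (φ n) := by
        funext n; exact hz1 (φ n)
      rw [this]; exact hr'to.comp hφ'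
    exact tendsto_nhds_unique h1 h2
  refine ⟨w, hpwr, ?_⟩
  · -- dist ↑w ξ = D - r
    refine le_antisymm ?_ ?_
    · -- upper bound via limit
      have hb : ∀ n, dist ((w : Completion X)) ξ ≤
          dist w (z (φ n)) + (dist p (y (φ n)) - r' (φ n) + 1/(φ n+1)) + 1/(φ n+1) := by
        intro n
        calc dist ((w : Completion X)) ξ
            ≤ dist ((w : Completion X)) ((z (φ n) : Completion X)) +
              dist ((z (φ n) : Completion X)) ((y (φ n) : Completion X)) +
              dist ((y (φ n) : Completion X)) ξ := dist_triangle4 _ _ _ _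
          _ ≤ dist w (z (φ n)) + (dist p (y (φ n)) - r' (φ n) + 1/(φ n+1)) + 1/(φ n+1) := by
              rw [Completion.dist_eq, Completion.dist_eq]
              exact add_le_add (add_le_add le_rfl (hz2 (φ n))) (hy (φ n)).le
      have hone : Tendsto (fun n : ℕ => 1/((φ n : ℝ)+1)) atTop (𝓝 0) :=
        tendsto_one_div_add_atTop_nhds_zero_nat.comp hφ'
      have hblim : Tendsto (fun n => dist w (z (φ n)) +
          (dist p (y (φ n)) - r' (φ n) + 1/(φ n+1)) + 1/(φ n+1)) atTop (𝓝 (0 + (D - r + 0) + 0)) := by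
        refine Tendsto.add (Tendsto.add ?_ ?_) hone
        · have : Tendsto (fun n => dist w (z (φ n))) atTop (𝓝 (dist w w)) :=
            (tendsto_const_nhds).dist hwto
          simpa using this
        · exact Tendsto.add ((hdpy.comp hφ').sub (hr'to.comp hφ')) hone
      have := ge_of_tendsto hblim (Eventually.of_forall hb)
      linarith [this]
    · -- lower bound: triangle
      have := dist_triangle ((p : Completion X)) ((w : Completion X)) ξ
      have hpw : dist ((p : Completion X)) ((w : Completion X)) = r := by
        rw [Completion.dist_eq]; exact hpwr
      linarith

lemma compact_radius_lt (hlength : IsLengthMetricSpace X) {x : X} {ξ : Completion X}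
    (hξ : ξ ∉ Set.range ((↑) : X → Completion X)) {r : ℝ} (hr0 : 0 ≤ r)
    (hcomp : IsCompact (Metric.closedBall x r)) : r < dist (x : Completion X) ξ := by
  by_contra h
  push_neg at h
  have hcomp' : IsCompact (Metric.closedBall x (dist (x : Completion X) ξ)) :=
    hcomp.of_isClosed_subset Metric.isClosed_closedBall (Metric.closedBall_subset_closedBall h)
  obtain ⟨z, hz1, hz2⟩ := exists_point_toward hlength dist_nonneg le_rfl hcomp'
  rw [sub_self] at hz2
  exact hξ ⟨z, (dist_eq_zero.1 hz2)⟩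

lemma exists_compact_closedBall' [LocallyCompactSpace X] (x : X) :
    ∃ ε > 0, IsCompact (Metric.closedBall x ε) := by
  obtain ⟨K, hKc, hK⟩ := exists_compact_mem_nhds x
  obtain ⟨ε, hε, hball⟩ := Metric.nhds_basis_closedBall.mem_iff.1 hK
  exact ⟨ε, hε, hKc.of_isClosed_subset Metric.isClosed_closedBall hball⟩

lemma exists_compact_enlarge (hlength : IsLengthMetricSpace X) [LocallyCompactSpace X] {x : X} {r : ℝ}
    (hr0 : 0 ≤ r) (hcomp : IsCompact (Metric.closedBall x r)) :
    ∃ δ > 0, IsCompact (Metric.closedBall x (r + δ)) := by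
  choose ε hε hεc using fun z : X => exists_compact_closedBall' z
  set K := Metric.closedBall x r with hK
  obtain ⟨t, htK, hcover⟩ := hcomp.elim_nhds_subcover (fun z => Metric.ball z (ε z / 2))
    (fun z _ => Metric.ball_mem_nhds z (by linarith [hε z]))
  have hxK : x ∈ K := Metric.mem_closedBall_self hr0
  have htne : t.Nonempty := by
    rcases mem_iUnion₂.1 (hcover hxK) with ⟨z, hzt, -⟩
    exact ⟨z, hzt⟩
  set m : ℝ := t.inf' htne ε with hm
  have hmpos : 0 < m := by
    rw [hm, Finset.lt_inf'_iff]
    exact fun z _ => hε z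
  have hmle : ∀ z ∈ t, m ≤ ε z := fun z hz => Finset.inf'_le _ hz
  refine ⟨m/4, by positivity, ?_⟩
  have hsub : Metric.closedBall x (r + m/4) ⊆ ⋃ z ∈ t, Metric.closedBall z (ε z) := by
    intro w hw
    rw [Metric.mem_closedBall] at hw
    rcases le_or_gt (dist x w) r with hle | hlt
    · rcases mem_iUnion₂.1 (hcover (Metric.mem_closedBall'.2 hle)) with ⟨z, hzt, hzball⟩
      exact mem_iUnion₂.2 ⟨z, hzt, Metric.closedBall_subset_closedBall (by linarith [hε z])
        (Metric.ball_subset_closedBall hzball)⟩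
    · obtain ⟨z', hz'1, hz'2⟩ := exists_point_on_path hlength x w
        (show (0:ℝ) < m/4 by positivity) hr0 hlt.le
      have hz'K : z' ∈ K := by rw [hK, Metric.mem_closedBall, dist_comm]; exact hz'1.le
      rcases mem_iUnion₂.1 (hcover hz'K) with ⟨z, hzt, hzball⟩
      refine mem_iUnion₂.2 ⟨z, hzt, ?_⟩
      rw [Metric.mem_closedBall]
      have h1 : dist z' z < ε z / 2 := by
        rw [Metric.mem_ball] at hzball; linarith [hzball]
      have hw' : dist x w ≤ r + m/4 := by rwa [dist_comm] at hw
      have h2 : dist z' w ≤ m/2 := by linarith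
      calc dist w z ≤ dist w z' + dist z' z := dist_triangle _ _ _
        _ ≤ m/2 + ε z / 2 := add_le_add (by rwa [dist_comm]) h1.le
        _ ≤ ε z := by linarith [hmle z hzt]
  have hU : IsCompact (⋃ z ∈ t, Metric.closedBall z (ε z)) :=
    t.isCompact_biUnion (fun z _ => hεc z)
  exact hU.of_isClosed_subset Metric.isClosed_closedBall hsub

lemma totallyBounded_closedBall_of (hlength : IsLengthMetricSpace X) {x : X} {R : ℝ} (hR : 0 < R)
    (hball : ∀ s, 0 ≤ s → s < R → IsCompact (Metric.closedBall x s)) :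
    TotallyBounded (Metric.closedBall x R) := by
  rw [Metric.totallyBounded_iff]
  intro eps heps
  set η : ℝ := min (eps/4) (R/2) with hη
  have hηpos : 0 < η := by positivity
  have hηR : η ≤ R/2 := min_le_right _ _
  have hηe : η ≤ eps/4 := min_le_left _ _
  have hcomp : IsCompact (Metric.closedBall x (R - η)) :=
    hball _ (by linarith) (by linarith)
  obtain ⟨t, htfin, htcover⟩ := Metric.totallyBounded_iff.1 hcomp.totallyBounded η hηpos
  refine ⟨t, htfin, ?_⟩
  intro w hw
  rw [Metric.mem_closedBall] at hw
  rcases le_or_gt (dist x w) (R - η) with hle | hlt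
  · have hwm : w ∈ Metric.closedBall x (R-η) := by
      rw [Metric.mem_closedBall, dist_comm]; exact hle
    rcases mem_iUnion₂.1 (htcover hwm) with ⟨c, hc, hcb⟩
    exact mem_iUnion₂.2 ⟨c, hc, Metric.ball_subset_ball (by linarith) hcb⟩
  · obtain ⟨z, hz1, hz2⟩ := exists_point_on_path hlength x w
      (show (0:ℝ) < η/2 by positivity) (by linarith) hlt.le
    have hzK : z ∈ Metric.closedBall x (R - η) := by
      rw [Metric.mem_closedBall, dist_comm]; exact hz1.le
    rcases mem_iUnion₂.1 (htcover hzK) with ⟨c, hc, hcb⟩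
    rw [Metric.mem_ball] at hcb
    refine mem_iUnion₂.2 ⟨c, hc, ?_⟩
    rw [Metric.mem_ball]
    have hzw : dist z w ≤ dist x w - (R - η) + η/2 := hz2
    calc dist w c ≤ dist w z + dist z c := dist_triangle _ _ _
      _ < (dist x w - (R - η) + η/2) + η := by
          rw [dist_comm w z]; exact add_lt_add_of_le_of_lt hzw hcb
      _ ≤ eps := by
          have hw' : dist x w ≤ R := by rwa [dist_comm] at hw
          linarith

lemma setup_of_not_complete (hlength : IsLengthMetricSpace X) [LocallyCompactSpace X]
    (hnc : ¬ CompleteSpace X) :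
    ∃ (x : X) (ξ : Completion X) (R : ℝ), 0 < R ∧
      ξ ∉ Set.range ((↑) : X → Completion X) ∧ dist (x : Completion X) ξ = R ∧
      ∀ s, 0 ≤ s → s < R → IsCompact (Metric.closedBall x s) := by
  -- there is a point outside the range
  have hnsurj : ∃ ξ₀ : Completion X, ξ₀ ∉ Set.range ((↑) : X → Completion X) := by
    by_contra h
    push_neg at h
    have hrange : Set.range ((↑) : X → Completion X) = Set.univ :=
      Set.eq_univ_of_forall h
    exact hnc ((completeSpace_iff_isComplete_range
      (Completion.isUniformEmbedding_coe X).isUniformInducing).2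
      (by rw [hrange]; exact completeSpace_iff_isComplete_univ.1 inferInstance))
  obtain ⟨ξ₀, hξ₀⟩ := hnsurj
  have hXne : Nonempty X := by
    by_contra h
    rw [not_nonempty_iff] at h
    have : Set.range ((↑) : X → Completion X) = ∅ := Set.range_eq_empty _
    have hd := Completion.denseRange_coe (α := X)
    rw [DenseRange, this] at hd
    have := hd ξ₀
    rw [closure_empty] at this
    exact this
  obtain ⟨x⟩ := hXne
  set T : Set ℝ := {r : ℝ | 0 ≤ r ∧ IsCompact (Metric.closedBall x r)} with hT
  have h0T : (0:ℝ) ∈ T := ⟨le_rfl, by simp [Metric.closedBall_zero]⟩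
  have hbdd : BddAbove T := ⟨dist (x : Completion X) ξ₀,
    fun r hr => (compact_radius_lt hlength hξ₀ hr.1 hr.2).le⟩
  obtain ⟨ε, hε, hεc⟩ := exists_compact_closedBall' x
  have hεT : ε ∈ T := ⟨hε.le, hεc⟩
  set R : ℝ := sSup T with hR
  have hRpos : 0 < R := lt_of_lt_of_le hε (le_csSup hbdd hεT)
  have hball : ∀ s, 0 ≤ s → s < R → IsCompact (Metric.closedBall x s) := by
    intro s hs0 hsR
    obtain ⟨r, hrT, hsr⟩ := exists_lt_of_lt_csSup ⟨0, h0T⟩ hsR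
    exact hrT.2.of_isClosed_subset Metric.isClosed_closedBall
      (Metric.closedBall_subset_closedBall hsr.le)
  have hR0 : 0 ≤ R := hRpos.le
  have hnotcomp : ¬ IsCompact (Metric.closedBall x R) := by
    intro h
    obtain ⟨δ, hδ, hδc⟩ := exists_compact_enlarge hlength hR0 h
    have : R + δ ∈ T := ⟨by linarith, hδc⟩
    have := le_csSup hbdd this
    linarith
  have htb : TotallyBounded (Metric.closedBall x R) :=
    totallyBounded_closedBall_of hlength hRpos hball
  have hnotcomplete : ¬ IsComplete (Metric.closedBall x R) := by
    intro h
    exact hnotcomp (isCompact_iff_totallyBounded_isComplete.2 ⟨htb, h⟩)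
  rw [IsComplete] at hnotcomplete
  push_neg at hnotcomplete
  obtain ⟨F, hFc, hFS, hFno⟩ := hnotcomplete
  set Fh : Filter (Completion X) := F.map ((↑) : X → Completion X) with hFh
  have hFhc : Cauchy Fh := hFc.map (Completion.uniformContinuous_coe X)
  obtain ⟨ξ, hFξ⟩ := CompleteSpace.complete hFhc
  have hFne : F.NeBot := hFc.1
  have hξr : ξ ∉ Set.range ((↑) : X → Completion X) := by
    rintro ⟨y, rfl⟩
    have hFy : F ≤ 𝓝 y := by
      have h1 : F ≤ comap ((↑) : X → Completion X) (𝓝 ((y : Completion X))) :=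
        le_trans Filter.le_comap_map (comap_mono hFξ)
      rwa [← (Completion.isUniformEmbedding_coe X).isUniformInducing.isInducing.nhds_eq_comap]
        at h1
    have hyS : y ∈ Metric.closedBall x R := by
      have hcp : ClusterPt y (𝓟 (Metric.closedBall x R)) :=
        NeBot.mono hFne (le_inf hFy hFS)
      have := mem_closure_iff_clusterPt.2 hcp
      rwa [Metric.isClosed_closedBall.closure_eq] at this
    exact hFno y hyS hFy
  have hDle : dist (x : Completion X) ξ ≤ R := by
    have hsub : ((↑) : X → Completion X) '' (Metric.closedBall x R) ⊆
        Metric.closedBall (x : Completion X) R := by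
      rintro _ ⟨w, hw, rfl⟩
      rw [Metric.mem_closedBall] at hw ⊢
      rw [Completion.dist_eq]; exact hw
    have hFh2 : Fh ≤ 𝓟 (Metric.closedBall (x : Completion X) R) := by
      calc Fh ≤ 𝓟 (((↑) : X → Completion X) '' (Metric.closedBall x R)) := by
            rw [hFh, ← Filter.map_principal]; exact Filter.map_mono hFS
        _ ≤ _ := principal_mono.2 hsub
    have hcp : ClusterPt ξ (𝓟 (Metric.closedBall (x : Completion X) R)) :=
      NeBot.mono hFhc.1 (le_inf hFξ hFh2)
    have := mem_closure_iff_clusterPt.2 hcp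
    rw [Metric.isClosed_closedBall.closure_eq] at this
    rw [Metric.mem_closedBall] at this
    rwa [dist_comm]
  have hDge : R ≤ dist (x : Completion X) ξ :=
    csSup_le ⟨0, h0T⟩ (fun r hr => (compact_radius_lt hlength hξr hr.1 hr.2).le)
  exact ⟨x, ξ, R, hRpos, hξr, le_antisymm hDle hDge, hball⟩

open Classical in
def nextPt (hlength : IsLengthMetricSpace X) (p : X) (ζ : Completion X) (r : ℝ) : X :=
  if h : 0 ≤ r ∧ r ≤ dist (p : Completion X) ζ ∧ IsCompact (Metric.closedBall p r) then
    (exists_point_toward hlength h.1 h.2.1 h.2.2).choose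
  else p

lemma nextPt_spec (hlength : IsLengthMetricSpace X) {p : X} {ζ : Completion X} {r : ℝ}
    (h1 : 0 ≤ r) (h2 : r ≤ dist (p : Completion X) ζ)
    (h3 : IsCompact (Metric.closedBall p r)) :
    dist p (nextPt hlength p ζ r) = r ∧
      dist ((nextPt hlength p ζ r : X) : Completion X) ζ = dist (p : Completion X) ζ - r := by
  classical
  have h : 0 ≤ r ∧ r ≤ dist (p : Completion X) ζ ∧ IsCompact (Metric.closedBall p r) :=
    ⟨h1, h2, h3⟩
  rw [nextPt, dif_pos h]
  exact (exists_point_toward hlength h.1 h.2.1 h.2.2).choose_spec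

def dyadic (hlength : IsLengthMetricSpace X) (x : X) (ξ : Completion X) (R : ℝ) :
    ℕ → ℕ → X
  | 0, _ => x
  | (n+1), k =>
    if k % 2 = 0 then dyadic hlength x ξ R n (k / 2)
    else nextPt hlength (dyadic hlength x ξ R n (k / 2))
      (if k / 2 + 1 = 2 ^ n then ξ
        else ((dyadic hlength x ξ R n (k / 2 + 1) : X) : Completion X))
      (R / 2 ^ (n + 1))

lemma dyadic_even (hlength : IsLengthMetricSpace X) {x : X} {ξ : Completion X} {R : ℝ}
    (n m : ℕ) :
    dyadic hlength x ξ R (n+1) (2*m) = dyadic hlength x ξ R n m := by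
  have h1 : (2*m) % 2 = 0 := by omega
  have h2 : (2*m) / 2 = m := by omega
  show (if (2*m) % 2 = 0 then dyadic hlength x ξ R n ((2*m) / 2)
    else nextPt hlength (dyadic hlength x ξ R n ((2*m) / 2))
      (if (2*m) / 2 + 1 = 2 ^ n then ξ
        else ((dyadic hlength x ξ R n ((2*m) / 2 + 1) : X) : Completion X))
      (R / 2 ^ (n + 1))) = dyadic hlength x ξ R n m
  simp only [h1, h2]
  norm_num

lemma chain_bound {c : ℕ → X} {d : ℝ} {N : ℕ} (hd : 0 ≤ d)
    (hc : ∀ k, k + 1 < N → dist (c k) (c (k+1)) ≤ d) :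
    ∀ k l, k ≤ l → l < N → dist (c k) (c l) ≤ d * ((l:ℝ) - k) := by
  intro k l hkl hlN
  induction l, hkl using Nat.le_induction with
  | base => simp
  | succ l hkl ih =>
    have hlN' : l < N := by omega
    calc dist (c k) (c (l+1)) ≤ dist (c k) (c l) + dist (c l) (c (l+1)) := dist_triangle _ _ _
      _ ≤ d * ((l:ℝ) - k) + d := add_le_add (ih hlN') (hc l (by omega))
      _ = d * (((l+1:ℕ):ℝ) - k) := by push_cast; ring

lemma dyadic_inv (hlength : IsLengthMetricSpace X) {x : X} {ξ : Completion X} {R : ℝ}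
    (hR : 0 < R) (hD : dist (x : Completion X) ξ = R)
    (hball : ∀ s, 0 ≤ s → s < R → IsCompact (Metric.closedBall x s)) :
    ∀ n : ℕ, (dyadic hlength x ξ R n 0 = x) ∧
      (∀ k : ℕ, k < 2^n →
        dist ((dyadic hlength x ξ R n k : X) : Completion X) ξ = R * (1 - (k:ℝ) / 2^n)) ∧
      (∀ k : ℕ, k + 1 < 2^n →
        dist (dyadic hlength x ξ R n k) (dyadic hlength x ξ R n (k+1)) = R / 2^n) := by
  set c := dyadic hlength x ξ R with hc
  intro n
  induction n with
  | zero =>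
    refine ⟨rfl, ?_, ?_⟩
    · intro k hk
      have hk0 : k = 0 := by omega
      subst hk0
      show dist ((x : X) : Completion X) ξ = _
      simpa using hD
    · intro k hk; omega
  | succ n ih =>
    obtain ⟨ih0, ihb, ihc⟩ := ih
    have h2n : (0:ℝ) < 2^n := by positivity
    have h2n1 : (0:ℝ) < 2^(n+1) := by positivity
    have hchain : ∀ k l, k ≤ l → l < 2^n →
        dist (c n k) (c n l) ≤ (R/2^n) * ((l:ℝ) - k) :=
      chain_bound (by positivity) (fun k hk => (ihc k hk).le)
    have hxdist : ∀ k, k < 2^n → dist x (c n k) ≤ R * k / 2^n := by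
      intro k hk
      have h := hchain 0 k (Nat.zero_le _) hk
      rw [ih0] at h
      calc dist x (c n k) ≤ (R/2^n) * ((k:ℝ) - (0:ℕ)) := h
        _ = R * k / 2^n := by push_cast; ring
    -- facts about the odd new points
    have hodd : ∀ m : ℕ, m < 2^n →
        c (n+1) (2*m+1) = nextPt hlength (c n m)
          (if m + 1 = 2^n then ξ else ((c n (m+1) : X) : Completion X)) (R / 2^(n+1)) := by
      intro m hm
      rw [hc]
      show dyadic hlength x ξ R (n+1) (2*m+1) = _
      have h1 : (2*m+1) % 2 = 1 := by omega
      have h2 : (2*m+1) / 2 = m := by omega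
      simp only [dyadic, h1, h2]
      norm_num
    have heven : ∀ m : ℕ, c (n+1) (2*m) = c n m := by
      intro m
      rw [hc]
      show dyadic hlength x ξ R (n+1) (2*m) = _
      have h1 : (2*m) % 2 = 0 := by omega
      have h2 : (2*m) / 2 = m := by omega
      simp only [dyadic, h1, h2]
      norm_num
    have hζdist : ∀ m : ℕ, m < 2^n →
        dist ((c n m : X) : Completion X)
          (if m + 1 = 2^n then ξ else ((c n (m+1) : X) : Completion X)) = R / 2^n := by
      intro m hm
      by_cases hlast : m + 1 = 2^n
      · rw [if_pos hlast, ihb m hm]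
        have hmr : (m:ℝ) = 2^n - 1 := by
          have := congrArg (Nat.cast : ℕ → ℝ) hlast
          push_cast at this
          linarith
        rw [hmr]
        field_simp
        ring
      · rw [if_neg hlast, Completion.dist_eq]
        exact ihc m (by omega)
    have hcompact : ∀ m : ℕ, m < 2^n → IsCompact (Metric.closedBall (c n m) (R / 2^(n+1))) := by
      intro m hm
      have hs : R * (2*m+1) / 2^(n+1) < R := by
        rw [div_lt_iff₀ h2n1]
        have : ((2*m+1 : ℕ) : ℝ) < 2^(n+1) := by
          have : (2*m+1 : ℕ) < 2^(n+1) := by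
            have := hm; rw [pow_succ]; omega
          exact_mod_cast this
        push_cast at this ⊢
        nlinarith
      have hcomp := hball (R * (2*m+1) / 2^(n+1)) (by positivity) hs
      refine hcomp.of_isClosed_subset Metric.isClosed_closedBall ?_
      intro w hw
      rw [Metric.mem_closedBall] at hw ⊢
      calc dist w x ≤ dist w (c n m) + dist (c n m) x := dist_triangle _ _ _
        _ ≤ R/2^(n+1) + R * m / 2^n := by
            refine add_le_add hw ?_
            rw [dist_comm]; exact hxdist m hm
        _ = R * (2*m+1) / 2^(n+1) := by
            rw [pow_succ]; field_simp; ring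
    have hspec : ∀ m : ℕ, m < 2^n →
        dist (c n m) (c (n+1) (2*m+1)) = R / 2^(n+1) ∧
        dist ((c (n+1) (2*m+1) : X) : Completion X)
          (if m + 1 = 2^n then ξ else ((c n (m+1) : X) : Completion X)) = R/2^n - R/2^(n+1) := by
      intro m hm
      rw [hodd m hm]
      have hle : R / 2^(n+1) ≤ R / 2^n := by
        apply div_le_div_of_nonneg_left hR.le h2n
        rw [pow_succ]; nlinarith
      have := nextPt_spec hlength (by positivity)
        (by rw [hζdist m hm]; exact hle) (hcompact m hm)
      rw [hζdist m hm] at this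
      exact this
    refine ⟨?_, ?_, ?_⟩
    · have := heven 0
      simpa [ih0] using this
    · -- clause b
      intro k hk
      rcases Nat.even_or_odd k with ⟨m, hm⟩ | ⟨m, hm⟩
      · subst hm
        have hm2 : m < 2^n := by rw [pow_succ] at hk; omega
        rw [show m + m = 2*m by ring, heven m, ihb m hm2]
        congr 1
        push_cast
        rw [pow_succ]
        field_simp
      · subst hm
        have hm2 : m < 2^n := by rw [pow_succ] at hk; omega
        have hsp := hspec m hm2
        by_cases hlast : m + 1 = 2^n
        · rw [if_pos hlast] at hsp
          rw [hsp.2]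
          have hmr : (m:ℝ) = 2^n - 1 := by
            have := congrArg (Nat.cast : ℕ → ℝ) hlast
            push_cast at this; linarith
          push_cast [hmr]
          rw [pow_succ]
          field_simp
          ring
        · rw [if_neg hlast] at hsp
          have hm1 : m + 1 < 2^n := by omega
          have hval : R/2^n - R/2^(n+1) = R/2^(n+1) := by
            rw [pow_succ]; field_simp; ring
          refine le_antisymm ?_ ?_
          · calc dist ((c (n+1) (2*m+1) : X) : Completion X) ξ
                ≤ dist ((c (n+1) (2*m+1) : X) : Completion X) ((c n (m+1) : X) : Completion X)
                  + dist ((c n (m+1) : X) : Completion X) ξ := dist_triangle _ _ _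
              _ = R/2^(n+1) + R * (1 - ((m+1:ℕ):ℝ)/2^n) := by
                  rw [hsp.2, hval, ihb (m+1) hm1]
              _ = R * (1 - ((2*m+1:ℕ):ℝ)/2^(n+1)) := by
                  push_cast
                  rw [pow_succ]
                  field_simp
                  ring
          · have htri : R ≤ dist x (c (n+1) (2*m+1)) +
                dist ((c (n+1) (2*m+1) : X) : Completion X) ξ := by
              rw [← hD]
              calc dist (x : Completion X) ξ ≤
                  dist (x : Completion X) ((c (n+1) (2*m+1) : X) : Completion X)
                  + dist ((c (n+1) (2*m+1) : X) : Completion X) ξ := dist_triangle _ _ _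
                _ = _ := by rw [Completion.dist_eq]
            have hxz : dist x (c (n+1) (2*m+1)) ≤ R * (2*m+1)/2^(n+1) := by
              calc dist x (c (n+1) (2*m+1)) ≤ dist x (c n m) + dist (c n m) (c (n+1) (2*m+1)) :=
                  dist_triangle _ _ _
                _ ≤ R * m/2^n + R/2^(n+1) := add_le_add (hxdist m hm2) hsp.1.le
                _ = R * (2*m+1)/2^(n+1) := by rw [pow_succ]; field_simp
            have hexp : R * (1 - (2*(m:ℝ)+1)/2^(n+1)) = R - R * (2*(m:ℝ)+1)/2^(n+1) := by
              ring
            push_cast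
            linarith [htri, hxz, hexp]
    · -- clause c
      intro k hk
      rcases Nat.even_or_odd k with ⟨m, hm⟩ | ⟨m, hm⟩
      · subst hm
        have hm2 : m < 2^n := by rw [pow_succ] at hk; omega
        rw [show m + m = 2*m by ring, show 2*m+1 = 2*m+1 from rfl, heven m]
        exact (hspec m hm2).1
      · subst hm
        have hm1 : m + 1 < 2^n := by rw [pow_succ] at hk; omega
        have hsp := hspec m (by omega)
        rw [if_neg (by omega)] at hsp
        have hval : R/2^n - R/2^(n+1) = R/2^(n+1) := by
          rw [pow_succ]; field_simp; ring
        have h1 : (2*m+1) + 1 = 2*(m+1) := by ring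
        rw [h1, heven (m+1)]
        rw [← Completion.dist_eq (c (n+1) (2*m+1)) (c n (m+1))]
        rw [hsp.2, hval]

variable {x : X} {ξ : Completion X} {R : ℝ}



-- exact distances at one level
lemma dyadic_dist (hlength : IsLengthMetricSpace X) (hR : 0 < R)
    (hD : dist (x : Completion X) ξ = R)
    (hball : ∀ s, 0 ≤ s → s < R → IsCompact (Metric.closedBall x s))
    (n : ℕ) {k l : ℕ} (hkl : k ≤ l) (hl : l < 2^n) :
    dist (dyadic hlength x ξ R n k) (dyadic hlength x ξ R n l) = R * ((l:ℝ) - k) / 2^n := by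
  obtain ⟨h0, hb, hc⟩ := dyadic_inv hlength hR hD hball n
  have h2n : (0:ℝ) < 2^n := by positivity
  have hd0 : (0:ℝ) ≤ R / 2^n := div_nonneg hR.le h2n.le
  refine le_antisymm ?_ ?_
  · have := chain_bound (c := dyadic hlength x ξ R n) (d := R / 2^n) (N := 2^n)
      hd0 (fun k hk => (hc k hk).le) k l hkl hl
    calc dist _ _ ≤ R/2^n * ((l:ℝ) - k) := this
      _ = R * ((l:ℝ) - k) / 2^n := by ring
  · have hk : k < 2^n := lt_of_le_of_lt hkl hl
    have htri : dist (x : Completion X) ξ ≤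
        dist (x : Completion X) ((dyadic hlength x ξ R n k : X) : Completion X) +
        dist (dyadic hlength x ξ R n k) (dyadic hlength x ξ R n l) +
        dist ((dyadic hlength x ξ R n l : X) : Completion X) ξ := by
      calc dist (x : Completion X) ξ ≤
          dist (x : Completion X) ((dyadic hlength x ξ R n l : X) : Completion X) +
          dist ((dyadic hlength x ξ R n l : X) : Completion X) ξ := dist_triangle _ _ _
        _ ≤ _ := by
            refine add_le_add ?_ le_rfl
            rw [Completion.dist_eq]
            calc dist x (dyadic hlength x ξ R n l)
                ≤ dist x (dyadic hlength x ξ R n k) +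
                  dist (dyadic hlength x ξ R n k) (dyadic hlength x ξ R n l) :=
                  dist_triangle _ _ _
              _ = _ := by rw [← Completion.dist_eq x (dyadic hlength x ξ R n k)]
    have hxk : dist (x : Completion X) ((dyadic hlength x ξ R n k : X) : Completion X)
        ≤ R * k / 2^n := by
      rw [Completion.dist_eq]
      have := chain_bound (c := dyadic hlength x ξ R n) (d := R / 2^n) (N := 2^n)
        hd0 (fun k hk => (hc k hk).le) 0 k (Nat.zero_le _) hk
      rw [h0] at this
      calc dist x (dyadic hlength x ξ R n k) ≤ R/2^n * ((k:ℝ) - (0:ℕ)) := this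
        _ = R * k / 2^n := by push_cast; ring
    have hlξ : dist ((dyadic hlength x ξ R n l : X) : Completion X) ξ = R * (1 - (l:ℝ)/2^n) :=
      hb l hl
    rw [hD] at htri
    have hexp : R * (1 - (l:ℝ)/2^n) = R - R * (l:ℝ)/2^n := by ring
    have hexp2 : R * ((l:ℝ) - k)/2^n = R * (l:ℝ)/2^n - R * (k:ℝ)/2^n := by ring
    have hexp3 : R * (k:ℝ)/2^n = R * (k:ℝ)/2^n := rfl
    linarith [htri, hxk, hlξ.le, hlξ.ge]

-- lifting across levels
lemma dyadic_lift (hlength : IsLengthMetricSpace X) (n m k : ℕ) :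
    dyadic hlength x ξ R (n+m) (k * 2^m) = dyadic hlength x ξ R n k := by
  induction m with
  | zero => simp
  | succ m ih =>
    have h1 : k * 2^(m+1) = 2 * (k * 2^m) := by ring
    rw [h1, show n + (m+1) = (n+m)+1 from rfl, dyadic_even, ih]

lemma floor_div_tendsto {v : ℝ} (hv0 : 0 ≤ v) :
    Tendsto (fun n : ℕ => ((⌊v * 2^n⌋₊ : ℝ)) / 2^n) atTop (𝓝 v) := by
  have hle : ∀ n : ℕ, ((⌊v * 2^n⌋₊ : ℝ)) / 2^n ≤ v := by
    intro n
    have h2n : (0:ℝ) < 2^n := by positivity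
    rw [div_le_iff₀ h2n]
    exact Nat.floor_le (by positivity)
  have hge : ∀ n : ℕ, v - (1/2:ℝ)^n ≤ ((⌊v * 2^n⌋₊ : ℝ)) / 2^n := by
    intro n
    have h2n : (0:ℝ) < 2^n := by positivity
    have h := (Nat.sub_one_lt_floor (v * 2^n)).le
    have h3 : ((1:ℝ)/2)^n = 1/2^n := by rw [div_pow, one_pow]
    have h4 : ((1:ℝ)/2^n) * 2^n = 1 := by field_simp
    rw [h3, le_div_iff₀ h2n]
    nlinarith
  have h1 : Tendsto (fun n : ℕ => v - (1/2:ℝ)^n) atTop (𝓝 (v - 0)) :=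
    tendsto_const_nhds.sub (tendsto_pow_atTop_nhds_zero_of_lt_one (by norm_num) (by norm_num))
  rw [sub_zero] at h1
  exact tendsto_of_tendsto_of_tendsto_of_le_of_le h1 tendsto_const_nhds hge hle

lemma exists_geodesic (hlength : IsLengthMetricSpace X) (hR : 0 < R)
    (hD : dist (x : Completion X) ξ = R)
    (hball : ∀ s, 0 ≤ s → s < R → IsCompact (Metric.closedBall x s)) :
    ∃ γ : ℝ → X, γ 0 = x ∧
      (∀ s t : ℝ, 0 ≤ s → s ≤ t → t < 1 → dist (γ s) (γ t) = R * (t - s)) ∧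
      (∀ t : ℝ, 0 ≤ t → t < 1 → dist ((γ t : X) : Completion X) ξ = R * (1 - t)) := by
  classical
  set u : ℝ → ℕ → X := fun t n => dyadic hlength x ξ R n ⌊t * 2^n⌋₊ with hu
  have huapp : ∀ t n, u t n = dyadic hlength x ξ R n ⌊t * 2^n⌋₊ := fun _ _ => rfl
  have hidx : ∀ t : ℝ, 0 ≤ t → t < 1 → ∀ n, ⌊t * 2^n⌋₊ < 2^n := by
    intro t ht0 ht1 n
    have h2n : (0:ℝ) < 2^n := by positivity
    rw [Nat.floor_lt (by positivity : (0:ℝ) ≤ t * 2^n)]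
    calc t * 2^n < 1 * 2^n := by nlinarith
      _ = ((2^n : ℕ) : ℝ) := by push_cast; ring
  have hzero : ∀ n, dyadic hlength x ξ R n 0 = x := fun n => (dyadic_inv hlength hR hD hball n).1
  -- distance bound across levels
  have hdd : ∀ t : ℝ, 0 ≤ t → t < 1 → ∀ n m : ℕ, n ≤ m →
      dist (u t n) (u t m) ≤ R * (1/2^n + 1/2^m) := by
    intro t ht0 ht1 n m hnm
    obtain ⟨p, rfl⟩ := Nat.exists_eq_add_of_le hnm
    have hlift : dyadic hlength x ξ R (n+p) (⌊t*2^n⌋₊ * 2^p) = dyadic hlength x ξ R n ⌊t*2^n⌋₊ :=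
      dyadic_lift hlength n p _
    have hkn := hidx t ht0 ht1 n
    have hkm := hidx t ht0 ht1 (n+p)
    have h2n : (0:ℝ) < 2^n := by positivity
    have h2m : (0:ℝ) < 2^(n+p) := by positivity
    have hbound : ∀ a b : ℕ, a < 2^(n+p) → b < 2^(n+p) →
        dist (dyadic hlength x ξ R (n+p) a) (dyadic hlength x ξ R (n+p) b) ≤
          R * |(a:ℝ) - b| / 2^(n+p) := by
      intro a b ha hb
      rcases le_total a b with h | h
      · rw [dyadic_dist hlength hR hD hball (n+p) h hb, abs_sub_comm, abs_of_nonneg (by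
          have : (a:ℝ) ≤ b := by exact_mod_cast h
          linarith)]
      · rw [dist_comm, dyadic_dist hlength hR hD hball (n+p) h ha, abs_of_nonneg (by
          have : (b:ℝ) ≤ a := by exact_mod_cast h
          linarith)]
    have hmul : ⌊t*2^n⌋₊ * 2^p < 2^(n+p) := by
      have hp : (0:ℕ) < 2^p := by positivity
      calc ⌊t*2^n⌋₊ * 2^p < (⌊t*2^n⌋₊ + 1) * 2^p := by
            exact Nat.mul_lt_mul_of_pos_right (Nat.lt_succ_self _) hp
        _ ≤ 2^n * 2^p := Nat.mul_le_mul_right _ hkn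
        _ = 2^(n+p) := (pow_add 2 n p).symm
    have hkey := hbound _ _ hmul hkm
    rw [hlift] at hkey
    rw [huapp, huapp]
    refine hkey.trans ?_
    have hA1 : ((⌊t*2^n⌋₊:ℝ)) ≤ t * 2^n := Nat.floor_le (by positivity)
    have hA2 : t * 2^n - 1 < (⌊t*2^n⌋₊:ℝ) := by
      have := Nat.sub_one_lt_floor (t * 2^n); linarith [this]
    have hB1 : ((⌊t*2^(n+p)⌋₊:ℝ)) ≤ t * 2^(n+p) := Nat.floor_le (by positivity)
    have hB2 : t * 2^(n+p) - 1 < (⌊t*2^(n+p)⌋₊:ℝ) := by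
      have := Nat.sub_one_lt_floor (t * 2^(n+p)); linarith [this]
    have h3 : t * 2^n * 2^p = t * 2^(n+p) := by rw [pow_add]; ring
    have h2p : (0:ℝ) < 2^p := by positivity
    have habs : |((⌊t*2^n⌋₊ * 2^p : ℕ):ℝ) - (⌊t*2^(n+p)⌋₊:ℝ)| ≤ 2^p + 1 := by
      rw [abs_le]
      constructor
      · push_cast
        nlinarith [hA2, hB1]
      · push_cast
        nlinarith [hA1, hB2]
    calc R * |((⌊t*2^n⌋₊ * 2^p : ℕ):ℝ) - (⌊t*2^(n+p)⌋₊:ℝ)| / 2^(n+p)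
        ≤ R * ((2:ℝ)^p + 1) / 2^(n+p) := by gcongr
      _ = R * (1/2^n + 1/2^(n+p)) := by
          rw [pow_add]
          field_simp
  -- membership in compact balls
  have hmem : ∀ t : ℝ, 0 ≤ t → t < 1 → ∀ n, u t n ∈ Metric.closedBall x (R * t) := by
    intro t ht0 ht1 n
    have h2n : (0:ℝ) < 2^n := by positivity
    have := dyadic_dist hlength hR hD hball n (Nat.zero_le ⌊t*2^n⌋₊) (hidx t ht0 ht1 n)
    rw [hzero n] at this
    rw [Metric.mem_closedBall, dist_comm, huapp, this]
    have hfl : ((⌊t*2^n⌋₊:ℝ)) ≤ t * 2^n := Nat.floor_le (by positivity)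
    rw [div_le_iff₀ h2n]
    push_cast
    nlinarith
  -- Cauchy
  have hcs : ∀ t : ℝ, 0 ≤ t → t < 1 → CauchySeq (u t) := by
    intro t ht0 ht1
    apply cauchySeq_of_le_tendsto_0 (fun N : ℕ => 2 * R * (1/2:ℝ)^N)
    · intro n m N hn hm
      have key : ∀ a b : ℕ, N ≤ a → N ≤ b → a ≤ b → dist (u t a) (u t b) ≤ 2 * R * (1/2:ℝ)^N := by
        intro a b hNa hNb hab
        refine (hdd t ht0 ht1 a b hab).trans ?_
        have h1 : (1:ℝ)/2^a ≤ 1/2^N := by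
          apply one_div_le_one_div_of_le (by positivity)
          exact pow_le_pow_right₀ (by norm_num) hNa
        have h2 : (1:ℝ)/2^b ≤ 1/2^N := by
          apply one_div_le_one_div_of_le (by positivity)
          exact pow_le_pow_right₀ (by norm_num) hNb
        have h3 : ((1:ℝ)/2)^N = 1/2^N := by rw [div_pow, one_pow]
        rw [h3]
        nlinarith
      rcases le_total n m with h | h
      · exact key n m hn hm h
      · rw [dist_comm]; exact key m n hm hn h
    · have : Tendsto (fun N : ℕ => ((1:ℝ)/2)^N) atTop (𝓝 0) :=
        tendsto_pow_atTop_nhds_zero_of_lt_one (by norm_num) (by norm_num)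
      have := this.const_mul (2 * R)
      simpa using this
  -- limits exist
  have hex : ∀ t : ℝ, 0 ≤ t → t < 1 → ∃ y : X, Tendsto (fun n => u t n) atTop (𝓝 y) := by
    intro t ht0 ht1
    have hcomp : IsCompact (Metric.closedBall x (R * t)) :=
      hball (R * t) (by positivity) (by nlinarith)
    obtain ⟨y, _, hy⟩ := cauchySeq_tendsto_of_isComplete hcomp.isComplete
      (hmem t ht0 ht1) (hcs t ht0 ht1)
    exact ⟨y, hy⟩
  set γ : ℝ → X := fun t =>
    if h : ∃ y : X, Tendsto (fun n => u t n) atTop (𝓝 y) then h.choose else x with hγ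
  have htends : ∀ t : ℝ, 0 ≤ t → t < 1 → Tendsto (fun n => u t n) atTop (𝓝 (γ t)) := by
    intro t ht0 ht1
    have h := hex t ht0 ht1
    rw [hγ]
    simp only [dif_pos h]
    exact h.choose_spec
  have hγ0 : γ 0 = x := by
    have h1 : Tendsto (fun n => u 0 n) atTop (𝓝 (γ 0)) := htends 0 le_rfl one_pos
    have h2 : ∀ n, u 0 n = x := by
      intro n
      rw [huapp, show (0:ℝ) * 2^n = 0 by ring, Nat.floor_zero, hzero n]
    rw [funext h2] at h1
    exact (tendsto_nhds_unique h1 tendsto_const_nhds)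
  refine ⟨γ, hγ0, ?_, ?_⟩
  · intro s t hs0 hst ht1
    have hs1 : s < 1 := lt_of_le_of_lt hst ht1
    have ht0 : 0 ≤ t := le_trans hs0 hst
    have h1 : Tendsto (fun n => dist (u s n) (u t n)) atTop (𝓝 (dist (γ s) (γ t))) :=
      (htends s hs0 hs1).dist (htends t ht0 ht1)
    have h2 : Tendsto (fun n => dist (u s n) (u t n)) atTop (𝓝 (R * (t - s))) := by
      have heq : ∀ n, dist (u s n) (u t n) =
          R * ((⌊t*2^n⌋₊:ℝ)/2^n) - R * ((⌊s*2^n⌋₊:ℝ)/2^n) := by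
        intro n
        have hmono : ⌊s*2^n⌋₊ ≤ ⌊t*2^n⌋₊ := by
          apply Nat.floor_mono
          have h2n : (0:ℝ) ≤ 2^n := by positivity
          nlinarith
        have := dyadic_dist hlength hR hD hball n hmono (hidx t ht0 ht1 n)
        rw [huapp, huapp, this]
        ring
      rw [funext heq]
      have hA := (floor_div_tendsto (v := t) ht0).const_mul R
      have hB := (floor_div_tendsto (v := s) hs0).const_mul R
      have := hA.sub hB
      have heq2 : R * t - R * s = R * (t - s) := by ring
      rwa [heq2] at this
    exact tendsto_nhds_unique h1 h2
  · intro t ht0 ht1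
    have hcoe : Tendsto (fun n => ((u t n : X) : Completion X)) atTop
        (𝓝 ((γ t : X) : Completion X)) :=
      ((Completion.coe_isometry (α := X)).continuous.tendsto (γ t)).comp (htends t ht0 ht1)
    have h1 : Tendsto (fun n => dist ((u t n : X) : Completion X) ξ) atTop
        (𝓝 (dist ((γ t : X) : Completion X) ξ)) :=
      hcoe.dist tendsto_const_nhds
    have h2 : Tendsto (fun n => dist ((u t n : X) : Completion X) ξ) atTop
        (𝓝 (R * (1 - t))) := by
      have heq : ∀ n, dist ((u t n : X) : Completion X) ξ =
          R - R * ((⌊t*2^n⌋₊:ℝ)/2^n) := by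
        intro n
        have := (dyadic_inv hlength hR hD hball n).2.1 ⌊t*2^n⌋₊ (hidx t ht0 ht1 n)
        rw [huapp, this]
        ring
      rw [funext heq]
      have hA := (floor_div_tendsto (v := t) ht0).const_mul R
      have := (tendsto_const_nhds (x := R) (f := (atTop : Filter ℕ))).sub hA
      have heq2 : R - R * t = R * (1 - t) := by ring
      rwa [heq2] at this
    exact tendsto_nhds_unique h1 h2

/-- Implication (1) → (2). -/
lemma one_to_two (hlength : IsLengthMetricSpace X) [LocallyCompactSpace X]
    [CompleteSpace X] (x : X) (r₀ : ℝ) : IsCompact (Metric.closedBall x r₀) := by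
  by_contra hnc
  set T : Set ℝ := {r : ℝ | 0 ≤ r ∧ IsCompact (Metric.closedBall x r)} with hT
  have h0T : (0:ℝ) ∈ T := ⟨le_rfl, by simp [Metric.closedBall_zero]⟩
  have hbdd : BddAbove T := by
    refine ⟨r₀, fun r hr => ?_⟩
    by_contra hlt
    push_neg at hlt
    exact hnc (hr.2.of_isClosed_subset Metric.isClosed_closedBall
      (Metric.closedBall_subset_closedBall hlt.le))
  obtain ⟨ε, hε, hεc⟩ := exists_compact_closedBall' x
  set R : ℝ := sSup T with hR
  have hRpos : 0 < R := lt_of_lt_of_le hε (le_csSup hbdd ⟨hε.le, hεc⟩)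
  have hball : ∀ s, 0 ≤ s → s < R → IsCompact (Metric.closedBall x s) := by
    intro s hs0 hsR
    obtain ⟨r, hrT, hsr⟩ := exists_lt_of_lt_csSup ⟨0, h0T⟩ hsR
    exact hrT.2.of_isClosed_subset Metric.isClosed_closedBall
      (Metric.closedBall_subset_closedBall hsr.le)
  have htb : TotallyBounded (Metric.closedBall x R) :=
    totallyBounded_closedBall_of hlength hRpos hball
  have hcomp : IsCompact (Metric.closedBall x R) :=
    isCompact_iff_totallyBounded_isComplete.2 ⟨htb, Metric.isClosed_closedBall.isComplete⟩
  obtain ⟨δ, hδ, hδc⟩ := exists_compact_enlarge hlength hRpos.le hcomp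
  have : R + δ ∈ T := ⟨by linarith, hδc⟩
  have := le_csSup hbdd this
  linarith

/-- Implication (1) → (4). -/
lemma one_to_four [CompleteSpace X] (a : ℝ) (γ : ℝ → X) (C : ℝ≥0) (ha : 0 < a)
    (hlip : LipschitzOnWith C γ (Set.Ico 0 a)) :
    ∃ γbar : ℝ → X, ContinuousOn γbar (Set.Icc 0 a) ∧ ∀ t ∈ Set.Ico 0 a, γbar t = γ t := by
  classical
  set s : ℕ → ℝ := fun n => a - a / (n + 2) with hs
  have hsmem : ∀ n, s n ∈ Set.Ico 0 a := by
    intro n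
    constructor
    · have h1 : a / (n + 2) ≤ a / 2 := by
        apply div_le_div_of_nonneg_left ha.le (by norm_num)
        · push_cast; linarith [Nat.cast_nonneg (α := ℝ) n]
      have h2 : a / 2 ≤ a := by linarith
      simp only [hs]
      have : (0:ℝ) < (n:ℝ) + 2 := by positivity
      linarith
    · simp only [hs]
      have : (0:ℝ) < a / (n + 2) := by positivity
      linarith
  have hdlip : ∀ u v : ℝ, u ∈ Set.Ico 0 a → v ∈ Set.Ico 0 a →
      dist (γ u) (γ v) ≤ C * dist u v := fun u v hu hv => LipschitzOnWith.dist_le_mul hlip u hu v hv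
  have hcs : CauchySeq (fun n => γ (s n)) := by
    apply cauchySeq_of_le_tendsto_0 (fun N : ℕ => (C:ℝ) * (a / (N + 2)))
    · intro n m N hn hm
      have key : dist (s n) (s m) ≤ a / (N + 2) := by
        rw [Real.dist_eq]
        have h1 : 0 < (n:ℝ) + 2 := by positivity
        have h2 : 0 < (m:ℝ) + 2 := by positivity
        have h3 : 0 < (N:ℝ) + 2 := by positivity
        have hn' : (N:ℝ) + 2 ≤ (n:ℝ) + 2 := by
          have : (N:ℝ) ≤ n := by exact_mod_cast hn
          linarith
        have hm' : (N:ℝ) + 2 ≤ (m:ℝ) + 2 := by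
          have : (N:ℝ) ≤ m := by exact_mod_cast hm
          linarith
        have hbn : a / (n + 2) ≤ a / (N + 2) := by
          apply div_le_div_of_nonneg_left ha.le h3 hn'
        have hbm : a / (m + 2) ≤ a / (N + 2) := by
          apply div_le_div_of_nonneg_left ha.le h3 hm'
        have h4 : 0 < a / ((n:ℝ) + 2) := by positivity
        have h5 : 0 < a / ((m:ℝ) + 2) := by positivity
        rw [abs_le]
        constructor
        · simp only [hs]; linarith
        · simp only [hs]; linarith
      calc dist (γ (s n)) (γ (s m)) ≤ C * dist (s n) (s m) :=
            hdlip _ _ (hsmem n) (hsmem m)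
        _ ≤ (C:ℝ) * (a / (N + 2)) := by
            apply mul_le_mul_of_nonneg_left key C.2
    · have h1 : Tendsto (fun N : ℕ => ((N:ℝ) + 2)) atTop atTop := by
        apply tendsto_atTop_add_const_right
        exact tendsto_natCast_atTop_atTop
      have h2 : Tendsto (fun N : ℕ => a / ((N:ℝ) + 2)) atTop (𝓝 0) :=
        Tendsto.div_atTop tendsto_const_nhds h1
      have := h2.const_mul (C:ℝ)
      simpa using this
  obtain ⟨y, hy⟩ := cauchySeq_tendsto_of_complete hcs
  set γbar : ℝ → X := fun t => if t < a then γ t else y with hγbar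
  have hagree : ∀ t ∈ Set.Ico 0 a, γbar t = γ t := by
    intro t ht
    simp only [hγbar, if_pos ht.2]
  have hslim : Tendsto s atTop (𝓝 a) := by
    have h1 : Tendsto (fun N : ℕ => ((N:ℝ) + 2)) atTop atTop :=
      tendsto_atTop_add_const_right _ _ tendsto_natCast_atTop_atTop
    have h2 : Tendsto (fun N : ℕ => a / ((N:ℝ) + 2)) atTop (𝓝 0) :=
      Tendsto.div_atTop tendsto_const_nhds h1
    have := (tendsto_const_nhds (x := a) (f := (atTop : Filter ℕ))).sub h2
    simpa using this
  have hdist_y : ∀ u ∈ Set.Ico 0 a, dist (γ u) y ≤ C * (a - u) := by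
    intro u hu
    have h1 : Tendsto (fun n => dist (γ u) (γ (s n))) atTop (𝓝 (dist (γ u) y)) :=
      tendsto_const_nhds.dist hy
    have h2 : Tendsto (fun n => (C:ℝ) * dist u (s n)) atTop (𝓝 ((C:ℝ) * dist u a)) :=
      (tendsto_const_nhds.dist hslim).const_mul _
    have hle : ∀ n, dist (γ u) (γ (s n)) ≤ (C:ℝ) * dist u (s n) :=
      fun n => hdlip _ _ hu (hsmem n)
    have := le_of_tendsto_of_tendsto' h1 h2 hle
    rw [Real.dist_eq, abs_of_nonpos (by linarith [hu.2])] at this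
    calc dist (γ u) y ≤ (C:ℝ) * -(u - a) := this
      _ = C * (a - u) := by ring
  have hliptot : LipschitzOnWith C γbar (Set.Icc 0 a) := by
    apply LipschitzOnWith.of_dist_le_mul
    intro u hu v hv
    rcases lt_or_ge u a with hua | hua <;> rcases lt_or_ge v a with hva | hva
    · rw [hagree u ⟨hu.1, hua⟩, hagree v ⟨hv.1, hva⟩]
      exact hdlip _ _ ⟨hu.1, hua⟩ ⟨hv.1, hva⟩
    · have hva' : v = a := le_antisymm hv.2 hva
      rw [hagree u ⟨hu.1, hua⟩]
      have : γbar v = y := by simp only [hγbar, if_neg (not_lt.2 hva)]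
      rw [this]
      calc dist (γ u) y ≤ C * (a - u) := hdist_y u ⟨hu.1, hua⟩
        _ = C * dist u v := by
            rw [hva', Real.dist_eq, abs_of_nonpos (by linarith)]
            ring_nf
    · have hua' : u = a := le_antisymm hu.2 hua
      have : γbar u = y := by simp only [hγbar, if_neg (not_lt.2 hua)]
      rw [this, hagree v ⟨hv.1, hva⟩, dist_comm]
      calc dist (γ v) y ≤ C * (a - v) := hdist_y v ⟨hv.1, hva⟩
        _ = C * dist u v := by
            rw [hua', Real.dist_eq, abs_of_nonneg (by linarith)]
    · have h1 : γbar u = y := by simp only [hγbar, if_neg (not_lt.2 hua)]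
      have h2 : γbar v = y := by simp only [hγbar, if_neg (not_lt.2 hva)]
      rw [h1, h2, dist_self]
      positivity
  exact ⟨γbar, hliptot.continuousOn, hagree⟩

/-- Implication (2) → (5). -/
lemma two_to_five (hHB : ∀ (x : X) (r : ℝ), IsCompact (Metric.closedBall x r))
    (a : ℝ) (γ : ℝ → X) (ha : 0 < a) (hdiv : IsDivergentPathOn γ 0 a) :
    eVariationOn γ (Set.Ico 0 a) = ⊤ := by
  by_contra hV
  have hVlt : eVariationOn γ (Set.Ico 0 a) < ⊤ := lt_top_iff_ne_top.2 hV
  set s : ℕ → ℝ := fun n => a - a / (n + 2) with hs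
  have hsmem : ∀ n, s n ∈ Set.Ico 0 a := by
    intro n
    have h1 : (0:ℝ) < (n:ℝ) + 2 := by positivity
    have h2 : a / (n + 2) ≤ a / 2 := by
      apply div_le_div_of_nonneg_left ha.le (by norm_num)
      linarith [Nat.cast_nonneg (α := ℝ) n]
    have h3 : (0:ℝ) < a / (n + 2) := by positivity
    exact ⟨by simp only [hs]; linarith, by simp only [hs]; linarith⟩
  have hsmono : Monotone s := by
    intro n m hnm
    simp only [hs]
    have h1 : (0:ℝ) < (n:ℝ) + 2 := by positivity
    have h2 : ((n:ℝ)) + 2 ≤ (m:ℝ) + 2 := by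
      have : (n:ℝ) ≤ m := by exact_mod_cast hnm
      linarith
    have := div_le_div_of_nonneg_left ha.le h1 h2
    linarith
  have hsa : Tendsto s atTop (𝓝 a) := by
    have h1 : Tendsto (fun N : ℕ => ((N:ℝ) + 2)) atTop atTop :=
      tendsto_atTop_add_const_right _ _ tendsto_natCast_atTop_atTop
    have h2 : Tendsto (fun N : ℕ => a / ((N:ℝ) + 2)) atTop (𝓝 0) :=
      Tendsto.div_atTop tendsto_const_nhds h1
    have := (tendsto_const_nhds (x := a) (f := (atTop : Filter ℕ))).sub h2
    simpa using this
  have hsplit : ∀ n, eVariationOn γ (Set.Icc 0 (s n)) + eVariationOn γ (Set.Ico (s n) a) =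
      eVariationOn γ (Set.Ico 0 a) := by
    intro n
    have hgreat : IsGreatest (Set.Icc 0 (s n)) (s n) := ⟨⟨(hsmem n).1, le_rfl⟩, fun y hy => hy.2⟩
    have hleast : IsLeast (Set.Ico (s n) a) (s n) := ⟨⟨le_rfl, (hsmem n).2⟩, fun y hy => hy.1⟩
    have hunion : Set.Icc 0 (s n) ∪ Set.Ico (s n) a = Set.Ico 0 a := by
      ext y
      simp only [Set.mem_union, Set.mem_Icc, Set.mem_Ico]
      constructor
      · rintro (⟨h1, h2⟩ | ⟨h1, h2⟩)
        · exact ⟨h1, lt_of_le_of_lt h2 (hsmem n).2⟩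
        · exact ⟨le_trans (hsmem n).1 h1, h2⟩
      · rintro ⟨h1, h2⟩
        rcases le_or_gt y (s n) with h | h
        · exact Or.inl ⟨h1, h⟩
        · exact Or.inr ⟨h.le, h2⟩
    rw [← hunion, eVariationOn.union γ hgreat hleast]
  have hVE : ∀ n, eVariationOn γ (Set.Icc 0 (s n)) ≤ eVariationOn γ (Set.Ico 0 a) :=
    fun n => (hsplit n) ▸ le_self_add
  have hVtop : ∀ n, eVariationOn γ (Set.Icc 0 (s n)) ≠ ⊤ :=
    fun n => (lt_of_le_of_lt (hVE n) hVlt).ne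
  have hsupV : eVariationOn γ (Set.Ico 0 a) ≤ ⨆ n, eVariationOn γ (Set.Icc 0 (s n)) := by
    rw [eVariationOn]
    refine iSup_le ?_
    rintro ⟨n, ⟨p, hp, hpmem⟩⟩
    have hpn : p n < a := (hpmem n).2
    have : ∀ᶠ N in atTop, p n < s N := hsa.eventually (eventually_gt_nhds hpn)
    obtain ⟨N, hN⟩ := this.exists
    refine le_trans ?_ (le_iSup _ N)
    apply eVariationOn.sum_le_of_monotoneOn_Iic
    · exact hp.monotoneOn _
    · intro i hi
      exact ⟨(hpmem i).1, le_trans (hp hi) hN.le⟩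
  have htail : ∀ ε : ℝ≥0∞, 0 < ε → ∃ N, eVariationOn γ (Set.Ico (s N) a) ≤ ε := by
    intro ε hε
    rcases lt_or_ge (eVariationOn γ (Set.Ico 0 a)) ε with h | h
    · refine ⟨0, le_trans ?_ h.le⟩
      exact eVariationOn.mono γ (fun y hy => ⟨le_trans (hsmem 0).1 hy.1, hy.2⟩)
    · have hE0 : eVariationOn γ (Set.Ico 0 a) ≠ 0 := by
        intro h0
        rw [h0] at h
        exact absurd (le_antisymm h zero_le) hε.ne'
      have hhalf : (0:ℝ≥0∞) < ε / 2 := ENNReal.half_pos hε.ne'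
      have h1 : eVariationOn γ (Set.Ico 0 a) - ε/2 < eVariationOn γ (Set.Ico 0 a) :=
        ENNReal.sub_lt_self hV hE0 hhalf.ne'
      have h2 := lt_of_lt_of_le h1 hsupV
      rw [lt_iSup_iff] at h2
      obtain ⟨N, hN⟩ := h2
      refine ⟨N, ?_⟩
      have h3 : eVariationOn γ (Set.Ico 0 a) ≤ eVariationOn γ (Set.Icc 0 (s N)) + ε/2 :=
        tsub_le_iff_right.1 hN.le
      have h4 : eVariationOn γ (Set.Icc 0 (s N)) + eVariationOn γ (Set.Ico (s N) a) ≤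
          eVariationOn γ (Set.Icc 0 (s N)) + ε/2 := (hsplit N).le.trans h3
      have h5 := (ENNReal.add_le_add_iff_left (hVtop N)).1 h4
      exact h5.trans (ENNReal.half_le_self)
  -- Cauchy sequence
  have hcs : CauchySeq (fun n => γ (s n)) := by
    rw [EMetric.cauchySeq_iff]
    intro ε hε
    set ε' : ℝ≥0∞ := min ε 1 with hε'
    have hε'pos : 0 < ε' := lt_min hε (by norm_num)
    have hε'top : ε' ≠ ⊤ := by
      have : ε' ≤ 1 := min_le_right _ _
      exact (lt_of_le_of_lt this (by norm_num)).ne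
    obtain ⟨N, hN⟩ := htail (ε'/2) (ENNReal.half_pos hε'pos.ne')
    refine ⟨N, fun m hm n hn => ?_⟩
    have hmem' : ∀ k, N ≤ k → γ (s k) ∈ γ '' (Set.Ico (s N) a) := by
      intro k hk
      exact ⟨s k, ⟨hsmono hk, (hsmem k).2⟩, rfl⟩
    have hedist : edist (γ (s m)) (γ (s n)) ≤ eVariationOn γ (Set.Ico (s N) a) :=
      eVariationOn.edist_le γ ⟨hsmono hm, (hsmem m).2⟩ ⟨hsmono hn, (hsmem n).2⟩
    calc edist (γ (s m)) (γ (s n)) ≤ ε'/2 := hedist.trans hN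
      _ < ε' := ENNReal.half_lt_self hε'pos.ne' hε'top
      _ ≤ ε := min_le_left _ _
  haveI : ProperSpace X := ⟨hHB⟩
  obtain ⟨y, hy⟩ := cauchySeq_tendsto_of_complete hcs
  obtain ⟨T, hT0, hTa, hout⟩ := hdiv (Metric.closedBall y 1) (hHB y 1)
  have h1 : ∀ᶠ n in atTop, T < s n := hsa.eventually (eventually_gt_nhds hTa)
  have h2 : ∀ᶠ n in atTop, γ (s n) ∈ Metric.closedBall y 1 :=
    hy.eventually (Metric.closedBall_mem_nhds y one_pos)
  obtain ⟨n, hn1, hn2⟩ := (h1.and h2).exists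
  exact hout (s n) hn1.le (hsmem n).2 hn2

/-- The common counterexample data under non-completeness. -/
lemma counterexample_data (hlength : IsLengthMetricSpace X) [LocallyCompactSpace X]
    (hnc : ¬ CompleteSpace X) :
    ∃ (R : ℝ) (γ : ℝ → X) (ξ : Completion X), 0 < R ∧
      ξ ∉ Set.range ((↑) : X → Completion X) ∧
      LipschitzOnWith R.toNNReal γ (Set.Ico 0 1) ∧
      (∀ s t : ℝ, 0 ≤ s → s ≤ t → t < 1 → dist (γ s) (γ t) = R * (t - s)) ∧
      (∀ t : ℝ, 0 ≤ t → t < 1 → dist ((γ t : X) : Completion X) ξ = R * (1 - t)) := by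
  obtain ⟨x, ξ, R, hR, hξ, hD, hball⟩ := setup_of_not_complete hlength hnc
  obtain ⟨γ, hγ0, hdist, hξdist⟩ := exists_geodesic hlength hR hD hball
  refine ⟨R, γ, ξ, hR, hξ, ?_, hdist, hξdist⟩
  apply LipschitzOnWith.of_dist_le_mul
  intro u hu v hv
  rw [Real.coe_toNNReal R hR.le]
  rcases le_total u v with h | h
  · rw [hdist u v hu.1 h hv.2, Real.dist_eq, abs_of_nonpos (by linarith)]
    ring_nf
    exact le_rfl
  · rw [dist_comm, hdist v u hv.1 h hu.2, Real.dist_eq, abs_of_nonneg (by linarith)]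

end HopfRinowAux

open Metric UniformSpace Filter

/-- **Hopf–Rinow for locally compact length spaces.** Let `(X, d)` be a locally
compact length metric space. The following are equivalent:
(1) `(X,d)` is complete as a metric space;
(2) `(X,d)` has the Heine–Borel property: every closed metric ball is compact;
(3) `(X,d)` is geodesically complete: every constant speed geodesic `γ : [0,a) → X` extends to a
    continuous path `γ̄ : [0,a] → X`;
(4) every Lipschitz path `γ : [0,a) → X` extends to a continuous path `γ̄ : [0,a] → X`;
(5) `(X,d)` is divergent-paths complete: every locally Lipschitz divergent path `γ : [0,a) → X`
    has infinite length. -/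
theorem hopf_rinow_locally_compact_length_space
    {X : Type*} [MetricSpace X] [LocallyCompactSpace X]
    (hlength : IsLengthMetricSpace X) :
    List.TFAE
      [ CompleteSpace X,
        ∀ (x : X) (r : ℝ), IsCompact (Metric.closedBall x r),
        ∀ (a : ℝ) (γ : ℝ → X), 0 < a → IsConstantSpeedGeodesicOn γ 0 a →
          ∃ γbar : ℝ → X, ContinuousOn γbar (Set.Icc 0 a) ∧ ∀ t ∈ Set.Ico 0 a, γbar t = γ t,
        ∀ (a : ℝ) (γ : ℝ → X) (C : ℝ≥0), 0 < a → LipschitzOnWith C γ (Set.Ico 0 a) →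
          ∃ γbar : ℝ → X, ContinuousOn γbar (Set.Icc 0 a) ∧ ∀ t ∈ Set.Ico 0 a, γbar t = γ t,
        ∀ (a : ℝ) (γ : ℝ → X), 0 < a → LocallyLipschitzOn (Set.Ico 0 a) γ →
          IsDivergentPathOn γ 0 a → eVariationOn γ (Set.Ico 0 a) = ⊤ ] := by
  tfae_have 1 → 2 := by
    intro h
    haveI := h
    exact fun x r => HopfRinowAux.one_to_two hlength x r
  tfae_have 2 → 1 := by
    intro h
    haveI : ProperSpace X := ⟨h⟩
    infer_instance
  tfae_have 1 → 4 := by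
    intro h a γ C ha hlip
    haveI := h
    exact HopfRinowAux.one_to_four a γ C ha hlip
  tfae_have 4 → 3 := by
    intro h4 a γ ha hgeo
    obtain ⟨C, hC⟩ := hgeo.1
    exact h4 a γ C ha hC
  tfae_have 2 → 5 := by
    intro h2 a γ ha hLL hdiv
    exact HopfRinowAux.two_to_five h2 a γ ha hdiv
  tfae_have 3 → 1 := by
    intro h3
    by_contra hnc
    obtain ⟨R, γ, ξ, hR, hξ, hlip, hdist, hξdist⟩ := HopfRinowAux.counterexample_data hlength hnc
    -- γ is a constant speed geodesic on [0,1)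
    have hIccsub : ∀ s t : ℝ, 0 ≤ s → t < 1 → Set.Icc s t ⊆ Set.Ico 0 1 :=
      fun s t hs ht y hy => ⟨hs.trans hy.1, lt_of_le_of_lt hy.2 ht⟩
    have hofReal : (R.toNNReal : ℝ≥0∞) = ENNReal.ofReal R := rfl
    have evar_eq : ∀ s t : ℝ, 0 ≤ s → s ≤ t → t < 1 →
        eVariationOn γ (Set.Icc s t) = ENNReal.ofReal (R * (t - s)) := by
      intro s t hs hst ht1
      refine le_antisymm ?_ ?_
      · have := HopfRinowAux.evar_le_lip (hlip.mono (hIccsub s t hs ht1)) (subset_refl (Set.Icc s t))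
        rwa [hofReal, ← ENNReal.ofReal_mul hR.le] at this
      · have h1 : edist (γ s) (γ t) ≤ eVariationOn γ (Set.Icc s t) :=
          eVariationOn.edist_le γ (Set.left_mem_Icc.2 hst) (Set.right_mem_Icc.2 hst)
        rwa [edist_dist, hdist s t hs hst ht1] at h1
    have hgeo : IsConstantSpeedGeodesicOn γ 0 1 := by
      refine ⟨⟨R.toNNReal, hlip⟩, ⟨R, hR.le, evar_eq⟩, ?_⟩
      intro t₀ _ _
      exact ⟨1, one_pos, fun s t hs hst ht1 _ _ => by
        rw [evar_eq s t hs hst ht1, edist_dist, hdist s t hs hst ht1]⟩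
    obtain ⟨γbar, hcont, hagree⟩ := h3 1 γ one_pos hgeo
    -- the filter
    have hne : (𝓝[Set.Ico (0:ℝ) 1] 1).NeBot := by
      apply mem_closure_iff_nhdsWithin_neBot.1
      rw [closure_Ico (zero_ne_one)]
      exact ⟨zero_le_one, le_rfl⟩
    have hmemIcc : (1:ℝ) ∈ Set.Icc (0:ℝ) 1 := ⟨zero_le_one, le_rfl⟩
    have h1 : Tendsto γbar (𝓝[Set.Ico (0:ℝ) 1] 1) (𝓝 (γbar 1)) :=
      (hcont 1 hmemIcc).mono_left (nhdsWithin_mono _ Set.Ico_subset_Icc_self)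
    have h2 : Tendsto γ (𝓝[Set.Ico (0:ℝ) 1] 1) (𝓝 (γbar 1)) := by
      apply h1.congr'
      filter_upwards [self_mem_nhdsWithin] with t ht
      exact hagree t ht
    have h3' : Tendsto (fun t => ((γ t : X) : Completion X)) (𝓝[Set.Ico (0:ℝ) 1] 1)
        (𝓝 ((γbar 1 : X) : Completion X)) :=
      (Completion.coe_isometry.continuous.tendsto _).comp h2
    have h4 : Tendsto (fun t => ((γ t : X) : Completion X)) (𝓝[Set.Ico (0:ℝ) 1] 1) (𝓝 ξ) := by
      rw [tendsto_iff_dist_tendsto_zero]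
      have hc : Tendsto (fun t : ℝ => R * (1 - t)) (𝓝[Set.Ico (0:ℝ) 1] 1) (𝓝 (R * (1 - 1))) :=
        ((continuous_const.mul (continuous_const.sub continuous_id)).tendsto 1).mono_left
          nhdsWithin_le_nhds
      rw [show R * ((1:ℝ) - 1) = 0 by ring] at hc
      apply hc.congr'
      filter_upwards [self_mem_nhdsWithin] with t ht
      exact (hξdist t ht.1 ht.2).symm
    exact hξ ⟨γbar 1, (tendsto_nhds_unique h3' h4)⟩
  tfae_have 5 → 1 := by
    intro h5
    by_contra hnc
    obtain ⟨R, γ, ξ, hR, hξ, hlip, hdist, hξdist⟩ := HopfRinowAux.counterexample_data hlength hnc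
    have hLL : LocallyLipschitzOn (Set.Ico 0 1) γ :=
      fun t ht => ⟨R.toNNReal, Set.Ico 0 1, self_mem_nhdsWithin, hlip⟩
    have hdivpath : IsDivergentPathOn γ 0 1 := by
      intro K hK
      by_contra h
      push_neg at h
      have hsel : ∀ n : ℕ, ∃ t : ℝ, 1 - 1/((n:ℝ)+2) ≤ t ∧ t < 1 ∧ γ t ∈ K := by
        intro n
        have h1 : (0:ℝ) < 1/((n:ℝ)+2) := by positivity
        have h2 : 1/((n:ℝ)+2) ≤ 1/2 := by
          apply div_le_div_of_nonneg_left one_pos.le (by norm_num)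
          linarith [Nat.cast_nonneg (α := ℝ) n]
        exact h (1 - 1/(n+2)) (by linarith) (by linarith)
      choose u hu1 hu2 hu3 using hsel
      have hu0 : ∀ n, 0 ≤ u n := by
        intro n
        have h1 : (0:ℝ) < 1/((n:ℝ)+2) := by positivity
        have h2 : 1/((n:ℝ)+2) ≤ 1/2 := by
          apply div_le_div_of_nonneg_left one_pos.le (by norm_num)
          linarith [Nat.cast_nonneg (α := ℝ) n]
        linarith [hu1 n]
      have hconv : Tendsto (fun n => ((γ (u n) : X) : Completion X)) atTop (𝓝 ξ) := by
        rw [tendsto_iff_dist_tendsto_zero]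
        have hb : ∀ n : ℕ, dist ((γ (u n) : X) : Completion X) ξ ≤ R * (1/((n:ℝ)+2)) := by
          intro n
          rw [hξdist (u n) (hu0 n) (hu2 n)]
          have := hu1 n
          nlinarith
        apply squeeze_zero (fun n => dist_nonneg) hb
        have h1 : Tendsto (fun N : ℕ => ((N:ℝ) + 2)) atTop atTop :=
          tendsto_atTop_add_const_right _ _ tendsto_natCast_atTop_atTop
        have h2 : Tendsto (fun N : ℕ => 1 / ((N:ℝ) + 2)) atTop (𝓝 0) :=
          Tendsto.div_atTop tendsto_const_nhds h1
        have := h2.const_mul R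
        simpa using this
      obtain ⟨y, hyK, φ, hφ, hyt⟩ := hK.tendsto_subseq hu3
      have hyconv : Tendsto (fun n => ((γ (u (φ n)) : X) : Completion X)) atTop
          (𝓝 ((y : X) : Completion X)) :=
        (Completion.coe_isometry.continuous.tendsto _).comp hyt
      have hξconv : Tendsto (fun n => ((γ (u (φ n)) : X) : Completion X)) atTop (𝓝 ξ) :=
        hconv.comp hφ.tendsto_atTop
      exact hξ ⟨y, tendsto_nhds_unique hyconv hξconv⟩
    have htop := h5 1 γ one_pos hLL hdivpath
    have hfin : eVariationOn γ (Set.Ico 0 1) ≤ R.toNNReal * ENNReal.ofReal (1 - 0) :=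
      HopfRinowAux.evar_le_lip hlip Set.Ico_subset_Icc_self
    rw [htop] at hfin
    exact (ENNReal.mul_ne_top ENNReal.coe_ne_top ENNReal.ofReal_ne_top)
      (top_le_iff.1 hfin)
  tfae_finish
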